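/- Let H be a quasi-Hopf algebra over k (with all the data and axioms listed in the context). Then for every a ∈ H the following two identities hold in H⊗H (with Δ(a) = a₍₁₎ ⊗ a₍₂₎ in sumless Sweedler notation): (1 ⊗ S⁻¹(a₍₂₎))·q^R·Δ(a₍₁₎) = (a ⊗ 1)·q^R, and Δ(a₍₁₎)·p^R·(1 ⊗ S(a₍₂₎)) = p^R·(a ⊗ 1). -/

import Mathlib

open scoped TensorProduct

section QuasiHopf

variable (k H : Type) [Field k] [Ring H] [Algebra k H]

/-- The trilinear map `H ⊗ (H ⊗ H) → H`, `x ⊗ y ⊗ z ↦ f(x) * u * (g(y) * v * h(z))`,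
used to formulate the zig-zag axioms of a quasi-Hopf algebra. -/
noncomputable def triMap (f g h : H →ₗ[k] H) (u v : H) :
    H ⊗[k] (H ⊗[k] H) →ₗ[k] H :=
  TensorProduct.lift
    ((LinearMap.lcomp k H
        (TensorProduct.lift
          (((LinearMap.mul k H) ∘ₗ (LinearMap.mulRight k v) ∘ₗ g).compl₂ h)))
      ∘ₗ (LinearMap.mul k H) ∘ₗ (LinearMap.mulRight k u) ∘ₗ f)

/-- A (finite-dimensional) quasi-Hopf algebra structure on the `k`-algebra `H`:
comultiplication `comul` (an algebra map), counit, an invertible coassociator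
`assoc = Φ` (with inverse `assocInv = Ψ`) satisfying quasi-coassociativity, the pentagon
identity, and the counit axiom, together with an invertible antipode `S` (an algebra
anti-homomorphism, with inverse `Sinv`) and evaluation/coevaluation elements
`alpha`, `beta` satisfying the antipode and zig-zag axioms. -/
structure QuasiHopfAlg : Type where
  comul : H →ₐ[k] H ⊗[k] H
  counit : H →ₐ[k] k
  counit_comul_left : ∀ h : H,
    (TensorProduct.lid k H) ((LinearMap.rTensor H counit.toLinearMap) (comul h)) = h
  counit_comul_right : ∀ h : H,
    (TensorProduct.rid k H) ((LinearMap.lTensor H counit.toLinearMap) (comul h)) = h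
  assoc : H ⊗[k] (H ⊗[k] H)
  assocInv : H ⊗[k] (H ⊗[k] H)
  assoc_mul_inv : assoc * assocInv = 1
  inv_mul_assoc : assocInv * assoc = 1
  quasi_coassoc : ∀ h : H,
    (Algebra.TensorProduct.assoc k k k H H H)
        ((Algebra.TensorProduct.map comul (AlgHom.id k H)) (comul h)) * assoc
      = assoc * ((Algebra.TensorProduct.map (AlgHom.id k H) comul) (comul h))
  pentagon :
      (Algebra.TensorProduct.map (AlgHom.id k H)
          (Algebra.TensorProduct.map (AlgHom.id k H)
            (Algebra.TensorProduct.includeLeft (R := k) (S := k) (B := H)))) assoc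
        * (Algebra.TensorProduct.map (AlgHom.id k H)
            ((Algebra.TensorProduct.assoc k k k H H H).toAlgHom.comp
              (Algebra.TensorProduct.map comul (AlgHom.id k H)))) assoc
        * (Algebra.TensorProduct.includeRight (R := k) (A := H)) assoc
      = (Algebra.TensorProduct.assoc k k k H H (H ⊗[k] H))
          ((Algebra.TensorProduct.map comul (AlgHom.id k (H ⊗[k] H))) assoc)
        * (Algebra.TensorProduct.map (AlgHom.id k H)
            (Algebra.TensorProduct.map (AlgHom.id k H) comul)) assoc
  counit_assoc :
    (Algebra.TensorProduct.map (AlgHom.id k H)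
        ((Algebra.TensorProduct.lid k H).toAlgHom.comp
          (Algebra.TensorProduct.map counit (AlgHom.id k H)))) assoc = 1
  S : H →ₗ[k] H
  Sinv : H →ₗ[k] H
  Sinv_S : ∀ h : H, Sinv (S h) = h
  S_Sinv : ∀ h : H, S (Sinv h) = h
  S_one : S 1 = 1
  S_mul : ∀ x y : H, S (x * y) = S y * S x
  alpha : H
  beta : H
  antipode_left : ∀ h : H,
    TensorProduct.lift ((LinearMap.mul k H) ∘ₗ (LinearMap.mulRight k alpha) ∘ₗ S)
        (comul h) = counit h • alpha
  antipode_right : ∀ h : H,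
    TensorProduct.lift (((LinearMap.mul k H) ∘ₗ (LinearMap.mulRight k beta)).compl₂ S)
        (comul h) = counit h • beta
  zig : triMap k H LinearMap.id S LinearMap.id beta alpha assoc = 1
  zag : triMap k H S LinearMap.id S alpha beta assocInv = 1

variable {k H}

/-- The element `q^R = Ψ₁ ⊗ S⁻¹(α·Ψ₃)·Ψ₂` of `H ⊗ H`. -/
noncomputable def qR (Q : QuasiHopfAlg k H) : H ⊗[k] H :=
  (LinearMap.lTensor H
      (TensorProduct.lift
        (((LinearMap.mul k H) ∘ₗ Q.Sinv ∘ₗ (LinearMap.mulLeft k Q.alpha)).flip)))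
    Q.assocInv

/-- The element `p^R = Φ₁ ⊗ Φ₂·β·S(Φ₃)` of `H ⊗ H`. -/
noncomputable def pR (Q : QuasiHopfAlg k H) : H ⊗[k] H :=
  (LinearMap.lTensor H
      (TensorProduct.lift
        (((LinearMap.mul k H) ∘ₗ (LinearMap.mulRight k Q.beta)).compl₂ Q.S)))
    Q.assoc

/-- The element `q^L = S(Φ₁)·α·Φ₂ ⊗ Φ₃` of `H ⊗ H`. -/
noncomputable def qL (Q : QuasiHopfAlg k H) : H ⊗[k] H :=
  (LinearMap.rTensor H
      (TensorProduct.lift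
        ((LinearMap.mul k H) ∘ₗ (LinearMap.mulRight k Q.alpha) ∘ₗ Q.S)))
    ((TensorProduct.assoc k H H H).symm Q.assoc)

/-- The element `p^L = Ψ₂·S⁻¹(Ψ₁·β) ⊗ Ψ₃` of `H ⊗ H`. -/
noncomputable def pL (Q : QuasiHopfAlg k H) : H ⊗[k] H :=
  (LinearMap.rTensor H
      (TensorProduct.lift
        (((LinearMap.mul k H).flip) ∘ₗ Q.Sinv ∘ₗ (LinearMap.mulRight k Q.beta))))
    ((TensorProduct.assoc k H H H).symm Q.assocInv)

end QuasiHopf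

variable {k H : Type} [Field k] [Ring H] [Algebra k H]

/-- The linear map `H ⊗ H → H ⊗ H` sending (a sum of) `x ⊗ y` to `Δ(x)·p^R·(1 ⊗ S(y))`. -/
noncomputable def zigzagR1 (Q : QuasiHopfAlg k H) : H ⊗[k] H →ₗ[k] H ⊗[k] H :=
  TensorProduct.lift
    (((LinearMap.mul k (H ⊗[k] H)) ∘ₗ (LinearMap.mulRight k (pR Q))
        ∘ₗ Q.comul.toLinearMap).compl₂
      ((TensorProduct.mk k H H 1) ∘ₗ Q.S))

/-- The linear map `H ⊗ H → H ⊗ H` sending (a sum of) `x ⊗ y` to `(1 ⊗ S⁻¹(y))·q^R·Δ(x)`. -/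
noncomputable def zigzagR2 (Q : QuasiHopfAlg k H) : H ⊗[k] H →ₗ[k] H ⊗[k] H :=
  TensorProduct.lift
    ((((LinearMap.mul k (H ⊗[k] H)).flip) ∘ₗ (LinearMap.mulLeft k (qR Q))
        ∘ₗ Q.comul.toLinearMap).compl₂
      ((TensorProduct.mk k H H 1) ∘ₗ Q.Sinv))

section Aux

variable {k H : Type} [Field k] [Ring H] [Algebra k H] (Q : QuasiHopfAlg k H)

/-- `u ⊗ v ↦ u * β * S v`. -/
noncomputable def fR : H ⊗[k] H →ₗ[k] H :=
  TensorProduct.lift (((LinearMap.mul k H) ∘ₗ (LinearMap.mulRight k Q.beta)).compl₂ Q.S)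

/-- `u ⊗ v ↦ S⁻¹(α v) * u`. -/
noncomputable def fL : H ⊗[k] H →ₗ[k] H :=
  TensorProduct.lift (((LinearMap.mul k H) ∘ₗ Q.Sinv ∘ₗ (LinearMap.mulLeft k Q.alpha)).flip)

lemma pR_eq : pR Q = LinearMap.lTensor H (fR Q) Q.assoc := rfl

lemma qR_eq : qR Q = LinearMap.lTensor H (fL Q) Q.assocInv := rfl

lemma fR_tmul (u v : H) : fR Q (u ⊗ₜ[k] v) = u * Q.beta * Q.S v := by
  simp [fR]

lemma fL_tmul (u v : H) : fL Q (u ⊗ₜ[k] v) = Q.Sinv (Q.alpha * v) * u := by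
  simp [fL]

lemma Sinv_mul (x y : H) : Q.Sinv (x * y) = Q.Sinv y * Q.Sinv x := by
  have h := Q.S_mul (Q.Sinv y) (Q.Sinv x)
  rw [Q.S_Sinv, Q.S_Sinv] at h
  rw [← h, Q.Sinv_S]

lemma fR_mul (q r : H) (t : H ⊗[k] H) :
    fR Q ((q ⊗ₜ[k] r) * t) = q * fR Q t * Q.S r := by
  induction t using TensorProduct.induction_on with
  | zero => simp
  | tmul u v =>
      simp [Algebra.TensorProduct.tmul_mul_tmul, fR_tmul, Q.S_mul, mul_assoc]
  | add s t hs ht => simp [mul_add, add_mul, hs, ht]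

lemma fL_mul (q r : H) (t : H ⊗[k] H) :
    fL Q (t * (q ⊗ₜ[k] r)) = Q.Sinv r * fL Q t * q := by
  induction t using TensorProduct.induction_on with
  | zero => simp
  | tmul u v =>
      simp only [Algebra.TensorProduct.tmul_mul_tmul, fL_tmul, ← mul_assoc, Sinv_mul]
      try simp [mul_assoc]
  | add s t hs ht => simp [add_mul, hs, ht, mul_add]

lemma fR_comul (y : H) : fR Q (Q.comul y) = Q.counit y • Q.beta :=
  Q.antipode_right y

lemma fL_comul (y : H) : fL Q (Q.comul y) = Q.counit y • Q.Sinv Q.alpha := by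
  have hS : ∀ t : H ⊗[k] H, Q.S (fL Q t) =
      TensorProduct.lift
        ((LinearMap.mul k H) ∘ₗ (LinearMap.mulRight k Q.alpha) ∘ₗ Q.S) t := by
    intro t
    induction t using TensorProduct.induction_on with
    | zero => simp
    | tmul u v => simp [fL_tmul, Q.S_mul, Q.S_Sinv, mul_assoc]
    | add s t hs ht => simp [hs, ht]
  have h2 := hS (Q.comul y)
  rw [Q.antipode_left y] at h2
  calc fL Q (Q.comul y) = Q.Sinv (Q.S (fL Q (Q.comul y))) := (Q.Sinv_S _).symm
    _ = Q.Sinv (Q.counit y • Q.alpha) := by rw [h2]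
    _ = Q.counit y • Q.Sinv Q.alpha := map_smul _ _ _

lemma fR_mul_comul (t : H ⊗[k] H) (y : H) :
    fR Q (t * Q.comul y) = Q.counit y • fR Q t := by
  induction t using TensorProduct.induction_on with
  | zero => simp
  | tmul q r =>
      rw [fR_mul, fR_comul, fR_tmul]
      rw [mul_smul_comm, smul_mul_assoc]
  | add s t hs ht => simp [add_mul, hs, ht]

lemma fL_comul_mul (t : H ⊗[k] H) (y : H) :
    fL Q (Q.comul y * t) = Q.counit y • fL Q t := by
  induction t using TensorProduct.induction_on with
  | zero => simp
  | tmul q r =>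
      rw [fL_mul, fL_comul, fL_tmul, mul_smul_comm, smul_mul_assoc]
      congr 1
      simp [Sinv_mul, mul_assoc]
  | add s t hs ht => simp [mul_add, hs, ht]

lemma zigzagR1_eq (u : H ⊗[k] H) :
    zigzagR1 Q u =
      LinearMap.lTensor H (fR Q)
        ((Algebra.TensorProduct.assoc k k k H H H)
            ((Algebra.TensorProduct.map Q.comul (AlgHom.id k H)) u) * Q.assoc) := by
  induction u using TensorProduct.induction_on with
  | zero => simp
  | tmul x y =>
      have h1 : zigzagR1 Q (x ⊗ₜ[k] y)
          = Q.comul x * pR Q * (((1:H) ⊗ₜ[k] Q.S y)) := by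
        simp [zigzagR1]
      rw [h1, pR_eq]
      have key : ∀ (v : H ⊗[k] H) (w : H ⊗[k] (H ⊗[k] H)),
          v * LinearMap.lTensor H (fR Q) w * ((1:H) ⊗ₜ[k] Q.S y)
            = LinearMap.lTensor H (fR Q)
                ((Algebra.TensorProduct.assoc k k k H H H) ((v ⊗ₜ[k] y : (H ⊗[k] H) ⊗[k] H)) * w) := by
        intro v w
        induction v using TensorProduct.induction_on with
        | zero => simp
        | tmul p q =>
            induction w using TensorProduct.induction_on with
            | zero => simp
            | tmul a t =>
                simp [Algebra.TensorProduct.assoc_tmul,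
                  Algebra.TensorProduct.tmul_mul_tmul, fR_mul, mul_assoc]
            | add s t hs ht => simp [mul_add, add_mul, hs, ht]
        | add s t hs ht =>
            simp only [add_mul, TensorProduct.add_tmul, map_add, hs, ht]
      rw [key]
      simp
  | add s t hs ht => simp [map_add, add_mul, hs, ht]

lemma lemB (u : H ⊗[k] H) :
    LinearMap.lTensor H (fR Q)
        (Q.assoc * (Algebra.TensorProduct.map (AlgHom.id k H) Q.comul) u)
      = pR Q *
          (((TensorProduct.rid k H)
              ((LinearMap.lTensor H Q.counit.toLinearMap) u)) ⊗ₜ[k] (1:H)) := by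
  induction u using TensorProduct.induction_on with
  | zero => simp
  | tmul x y =>
      have key : ∀ w : H ⊗[k] (H ⊗[k] H),
          LinearMap.lTensor H (fR Q) (w * (x ⊗ₜ[k] Q.comul y))
            = Q.counit y • (LinearMap.lTensor H (fR Q) w * (x ⊗ₜ[k] (1:H))) := by
        intro w
        induction w using TensorProduct.induction_on with
        | zero => simp
        | tmul a t =>
            simp [Algebra.TensorProduct.tmul_mul_tmul, fR_mul_comul,
              TensorProduct.tmul_smul, TensorProduct.smul_tmul']
        | add s t hs ht => simp [add_mul, hs, ht]
      simp only [Algebra.TensorProduct.map_tmul, AlgHom.coe_id, id_eq, key, pR_eq,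
        LinearMap.lTensor_tmul, TensorProduct.rid_tmul, AlgHom.toLinearMap_apply]
      rw [← TensorProduct.smul_tmul', mul_smul_comm]
  | add s t hs ht => simp [map_add, mul_add, TensorProduct.add_tmul, hs, ht]

lemma zigzagR2_eq (u : H ⊗[k] H) :
    zigzagR2 Q u =
      LinearMap.lTensor H (fL Q)
        (Q.assocInv *
          (Algebra.TensorProduct.assoc k k k H H H)
            ((Algebra.TensorProduct.map Q.comul (AlgHom.id k H)) u)) := by
  induction u using TensorProduct.induction_on with
  | zero => simp
  | tmul x y =>
      have h1 : zigzagR2 Q (x ⊗ₜ[k] y)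
          = ((1:H) ⊗ₜ[k] Q.Sinv y) * (qR Q * Q.comul x) := by
        simp [zigzagR2]
      rw [h1, qR_eq]
      have key : ∀ (v : H ⊗[k] H) (w : H ⊗[k] (H ⊗[k] H)),
          ((1:H) ⊗ₜ[k] Q.Sinv y) * (LinearMap.lTensor H (fL Q) w * v)
            = LinearMap.lTensor H (fL Q)
                (w * (Algebra.TensorProduct.assoc k k k H H H) ((v ⊗ₜ[k] y : (H ⊗[k] H) ⊗[k] H))) := by
        intro v w
        induction v using TensorProduct.induction_on with
        | zero => simp
        | tmul p q =>
            induction w using TensorProduct.induction_on with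
            | zero => simp
            | tmul a t =>
                simp [Algebra.TensorProduct.assoc_tmul,
                  Algebra.TensorProduct.tmul_mul_tmul, fL_mul, mul_assoc]
            | add s t hs ht => simp [mul_add, add_mul, hs, ht]
        | add s t hs ht =>
            simp only [mul_add, TensorProduct.add_tmul, map_add, hs, ht]
      rw [key]
      simp
  | add s t hs ht => simp [map_add, mul_add, hs, ht]

lemma lemB' (u : H ⊗[k] H) :
    LinearMap.lTensor H (fL Q)
        ((Algebra.TensorProduct.map (AlgHom.id k H) Q.comul) u * Q.assocInv)
      = (((TensorProduct.rid k H)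
            ((LinearMap.lTensor H Q.counit.toLinearMap) u)) ⊗ₜ[k] (1:H)) * qR Q := by
  induction u using TensorProduct.induction_on with
  | zero => simp
  | tmul x y =>
      have key : ∀ w : H ⊗[k] (H ⊗[k] H),
          LinearMap.lTensor H (fL Q) ((x ⊗ₜ[k] Q.comul y) * w)
            = Q.counit y • ((x ⊗ₜ[k] (1:H)) * LinearMap.lTensor H (fL Q) w) := by
        intro w
        induction w using TensorProduct.induction_on with
        | zero => simp
        | tmul a t =>
            simp [Algebra.TensorProduct.tmul_mul_tmul, fL_comul_mul,
              TensorProduct.tmul_smul, TensorProduct.smul_tmul']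
        | add s t hs ht => simp [mul_add, hs, ht]
      simp only [Algebra.TensorProduct.map_tmul, AlgHom.coe_id, id_eq, key, qR_eq,
        LinearMap.lTensor_tmul, TensorProduct.rid_tmul, AlgHom.toLinearMap_apply]
      rw [← TensorProduct.smul_tmul', smul_mul_assoc]
  | add s t hs ht => simp [map_add, add_mul, TensorProduct.add_tmul, hs, ht]

lemma inv_quasi_coassoc (a : H) :
    Q.assocInv *
        (Algebra.TensorProduct.assoc k k k H H H)
          ((Algebra.TensorProduct.map Q.comul (AlgHom.id k H)) (Q.comul a))
      = (Algebra.TensorProduct.map (AlgHom.id k H) Q.comul) (Q.comul a) * Q.assocInv := by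
  set A := (Algebra.TensorProduct.assoc k k k H H H)
      ((Algebra.TensorProduct.map Q.comul (AlgHom.id k H)) (Q.comul a)) with hA
  set B := (Algebra.TensorProduct.map (AlgHom.id k H) Q.comul) (Q.comul a) with hB
  have h : A * Q.assoc = Q.assoc * B := Q.quasi_coassoc a
  calc Q.assocInv * A = Q.assocInv * A * (Q.assoc * Q.assocInv) := by
        rw [Q.assoc_mul_inv, mul_one]
    _ = Q.assocInv * (A * Q.assoc) * Q.assocInv := by rw [mul_assoc, mul_assoc, mul_assoc]
    _ = Q.assocInv * (Q.assoc * B) * Q.assocInv := by rw [h]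
    _ = (Q.assocInv * Q.assoc) * (B * Q.assocInv) := by rw [mul_assoc, mul_assoc, mul_assoc]
    _ = B * Q.assocInv := by rw [Q.inv_mul_assoc, one_mul]

end Aux

/-- For all `a ∈ H`: `(1 ⊗ S⁻¹(a₍₂₎))·q^R·Δ(a₍₁₎) = (a ⊗ 1)·q^R` and
`Δ(a₍₁₎)·p^R·(1 ⊗ S(a₍₂₎)) = p^R·(a ⊗ 1)`. -/
theorem stmt9 (k H : Type) [Field k] [Ring H] [Algebra k H] [Module.Finite k H]
    (Q : QuasiHopfAlg k H) :
    ∀ a : H,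
      zigzagR2 Q (Q.comul a) = (a ⊗ₜ[k] (1 : H)) * qR Q ∧
      zigzagR1 Q (Q.comul a) = pR Q * (a ⊗ₜ[k] (1 : H)) := by
  intro a
  constructor
  · rw [zigzagR2_eq, inv_quasi_coassoc, lemB', Q.counit_comul_right a]
  · rw [zigzagR1_eq, Q.quasi_coassoc a, lemB, Q.counit_comul_right a]
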